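/- arXiv:2308.14476 — 7 statements merged into one kernel-verified Lean document; each statement's English description precedes it below -/
import Mathlib

section
/- For every visit sequence σ of length n+1, every index k ∈ {0,…,n}, and all real start times t ≤ t′, the arrival times satisfy 0 ≤ a_k(t′) − a_k(t) ≤ t′ − t and the service-start times satisfy 0 ≤ s_k(t′) − s_k(t) ≤ t′ − t; that is, each arrival time a_k and each service-start time s_k is a nondecreasing, 1-Lipschitz function of the start time t. -/
/-- Arrival times of a visit sequence started at time `t`:
`a 0 = t`, `a (k+1) = s k + μ k + δ k` where `s k = min (max (a k) (e k)) (l k)`. -/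
noncomputable def arrive (μ e l δ : ℕ → ℝ) (t : ℝ) : ℕ → ℝ
  | 0 => t
  | k + 1 => min (max (arrive μ e l δ t k) (e k)) (l k) + μ k + δ k

/-- Service start times with time warp. -/
noncomputable def serve (μ e l δ : ℕ → ℝ) (t : ℝ) (k : ℕ) : ℝ :=
  min (max (arrive μ e l δ t k) (e k)) (l k)

/-- Total time warp of a visit sequence of length `n+1` started at time `t`. -/
noncomputable def timeWarp (n : ℕ) (μ e l δ : ℕ → ℝ) (t : ℝ) : ℝ :=
  ∑ k ∈ Finset.range (n + 1), max (arrive μ e l δ t k - l k) 0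

/-- Total waiting time of a visit sequence of length `n+1` started at time `t`. -/
noncomputable def waiting (n : ℕ) (μ e l δ : ℕ → ℝ) (t : ℝ) : ℝ :=
  ∑ k ∈ Finset.range (n + 1), max (e k - arrive μ e l δ t k) 0

/-- Duration of a visit sequence of length `n+1` started at time `t`. -/
noncomputable def duration (n : ℕ) (μ e l δ : ℕ → ℝ) (t : ℝ) : ℝ :=
  (∑ k ∈ Finset.range (n + 1), μ k) + (∑ k ∈ Finset.range n, δ k) +
    waiting n μ e l δ t


lemma clamp_mono_lip (x y e l d : ℝ) (hxy : x ≤ y) (hd0 : 0 ≤ d) (hd : y - x ≤ d) :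
    min (max x e) l ≤ min (max y e) l ∧
    min (max y e) l - min (max x e) l ≤ d := by
  constructor
  · exact min_le_min (max_le_max hxy le_rfl) le_rfl
  · have h1 : max y e ≤ max x e + d :=
      max_le (by linarith [le_max_left x e]) (by linarith [le_max_right x e])
    have h2 : min (max y e) l ≤ min (max x e + d) (l + d) :=
      min_le_min h1 (by linarith)
    have h3 : min (max x e + d) (l + d) = min (max x e) l + d := by
      rcases le_total (max x e) l with h | h <;> simp [min_def, h] <;> split_ifs <;> linarith
    linarith

/-- Each arrival time and each service-start time is a nondecreasing,
1-Lipschitz function of the start time. -/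
theorem arrive_serve_monotone_lipschitz
    (n : ℕ) (μ e l δ : ℕ → ℝ)
    (hμ : ∀ k ≤ n, 0 ≤ μ k) (hel : ∀ k ≤ n, e k ≤ l k) (hδ : ∀ k < n, 0 ≤ δ k)
    (k : ℕ) (hk : k ≤ n) (t t' : ℝ) (ht : t ≤ t') :
    0 ≤ arrive μ e l δ t' k - arrive μ e l δ t k ∧
    arrive μ e l δ t' k - arrive μ e l δ t k ≤ t' - t ∧
    0 ≤ serve μ e l δ t' k - serve μ e l δ t k ∧
    serve μ e l δ t' k - serve μ e l δ t k ≤ t' - t := by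
  induction k with
  | zero =>
    have h := clamp_mono_lip t t' (e 0) (l 0) (t' - t) ht (by linarith) le_rfl
    refine ⟨by simpa [arrive] using ht, by simp [arrive], ?_, ?_⟩ <;>
      simp only [serve, arrive] <;> linarith [h.1, h.2]
  | succ k ih =>
    obtain ⟨ha1, ha2, hs1, hs2⟩ := ih (le_of_lt (Nat.lt_of_succ_le hk))
    have harr : arrive μ e l δ t' (k+1) - arrive μ e l δ t (k+1)
        = serve μ e l δ t' k - serve μ e l δ t k := by
      simp only [arrive, serve]; ring
    have h := clamp_mono_lip (arrive μ e l δ t (k+1)) (arrive μ e l δ t' (k+1))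
      (e (k+1)) (l (k+1)) (t' - t) (by linarith) (by linarith) (by linarith)
    exact ⟨by linarith, by linarith, by simp only [serve]; linarith [h.1],
      by simp only [serve]; linarith [h.2]⟩
end

section
/- For every visit sequence σ of length n+1 and every real start time t, the completion time of the last visit equals the start time plus duration minus time warp: s_n(t) + μ_n = t + D_σ(t) − TW_σ(t). -/
lemma serve_eq (μ e l δ : ℕ → ℝ) (t : ℝ) (k : ℕ) (h : e k ≤ l k) :
    serve μ e l δ t k = arrive μ e l δ t k
      + max (e k - arrive μ e l δ t k) 0 - max (arrive μ e l δ t k - l k) 0 := by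
  unfold serve
  rcases le_total (arrive μ e l δ t k) (e k) with h1 | h1
  · rw [max_eq_right h1, min_eq_left h, max_eq_left (by linarith),
      max_eq_right (by linarith)]
    ring
  · rw [max_eq_left h1]
    rcases le_total (arrive μ e l δ t k) (l k) with h2 | h2
    · rw [min_eq_left h2, max_eq_right (by linarith), max_eq_right (by linarith)]
      ring
    · rw [min_eq_right h2, max_eq_right (by linarith), max_eq_left (by linarith)]
      ring

/-- The completion time of the last visit equals the start time plus duration
minus time warp. -/
theorem serve_last_add_service_eq
    (n : ℕ) (μ e l δ : ℕ → ℝ)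
    (hμ : ∀ k ≤ n, 0 ≤ μ k) (hel : ∀ k ≤ n, e k ≤ l k) (hδ : ∀ k < n, 0 ≤ δ k)
    (t : ℝ) :
    serve μ e l δ t n + μ n =
      t + duration n μ e l δ t - timeWarp n μ e l δ t := by
  induction n with
  | zero =>
    rw [serve_eq μ e l δ t 0 (hel 0 le_rfl)]
    simp [duration, waiting, timeWarp, arrive]
    ring
  | succ m ih =>
    have ihm := ih (fun k hk => hμ k (hk.trans (Nat.le_succ m)))
      (fun k hk => hel k (hk.trans (Nat.le_succ m)))
      (fun k hk => hδ k (hk.trans (Nat.lt_succ_self m)))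
    have ha : arrive μ e l δ t (m + 1) = serve μ e l δ t m + μ m + δ m := rfl
    rw [serve_eq μ e l δ t (m + 1) (hel (m + 1) le_rfl)]
    unfold duration waiting timeWarp at *
    rw [Finset.sum_range_succ (f := μ) (n := m + 1),
      Finset.sum_range_succ (f := δ) (n := m),
      Finset.sum_range_succ (f := fun k => max (e k - arrive μ e l δ t k) 0) (n := m + 1),
      Finset.sum_range_succ (f := fun k => max (arrive μ e l δ t k - l k) 0) (n := m + 1)]
    rw [ha]
    linarith
end

section
/- For every visit sequence σ and all real start times t ≤ t′, the total time warp satisfies 0 ≤ TW_σ(t′) − TW_σ(t) ≤ t′ − t; that is, TW_σ is a nondecreasing, 1-Lipschitz function of the start time. -/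
lemma clamp_warp_key (E L a a' : ℝ) (h : a ≤ a') :
    min (max a E) L ≤ min (max a' E) L ∧
    max (a - L) 0 ≤ max (a' - L) 0 ∧
    (min (max a' E) L - min (max a E) L) + (max (a' - L) 0 - max (a - L) 0) ≤ a' - a := by
  refine ⟨min_le_min_right _ (max_le_max_right _ h), max_le_max (by linarith) le_rfl, ?_⟩
  rcases le_total a' L with h1 | h1
  · have : max (a - L) 0 = 0 := max_eq_right (by linarith)
    have h2 : max (a' - L) 0 = 0 := max_eq_right (by linarith)
    rw [this, h2]
    rcases le_total a E with h3 | h3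
    · rcases le_total a' E with h4 | h4
      · rw [max_eq_right h3, max_eq_right h4]; linarith
      · rw [max_eq_right h3, max_eq_left h4, min_eq_left h1,
          min_eq_left (le_trans h4 h1)]
        linarith
    · rw [max_eq_left h3, max_eq_left (le_trans h3 h), min_eq_left h1,
        min_eq_left (le_trans h h1)]
      linarith
  · have hs' : min (max a' E) L = L := min_eq_right (le_trans h1 (le_max_left _ _))
    have h2 : max (a' - L) 0 = a' - L := max_eq_left (by linarith)
    rw [hs', h2]
    rcases le_total a L with h3 | h3
    · have : max (a - L) 0 = 0 := max_eq_right (by linarith)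
      rw [this]
      have : a ≤ min (max a E) L := le_min (le_max_left _ _) h3
      linarith
    · have hs : min (max a E) L = L := min_eq_right (le_trans h3 (le_max_left _ _))
      have : max (a - L) 0 = a - L := max_eq_left (by linarith)
      rw [hs, this]; linarith

lemma aux_inv (μ e l δ : ℕ → ℝ) (t t' : ℝ) (ht : t ≤ t') (m : ℕ) :
    arrive μ e l δ t m ≤ arrive μ e l δ t' m ∧
    0 ≤ ∑ k ∈ Finset.range m,
      (max (arrive μ e l δ t' k - l k) 0 - max (arrive μ e l δ t k - l k) 0) ∧
    (arrive μ e l δ t' m - arrive μ e l δ t m) +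
      ∑ k ∈ Finset.range m,
        (max (arrive μ e l δ t' k - l k) 0 - max (arrive μ e l δ t k - l k) 0)
      ≤ t' - t := by
  induction m with
  | zero =>
    simp only [arrive, Finset.range_zero, Finset.sum_empty]
    exact ⟨ht, le_rfl, by linarith⟩
  | succ m ih =>
    obtain ⟨hA, hS, hAS⟩ := ih
    obtain ⟨h1, h2, h3⟩ := clamp_warp_key (e m) (l m) _ _ hA
    refine ⟨by simp only [arrive]; linarith, ?_, ?_⟩
    · rw [Finset.sum_range_succ]; linarith
    · rw [Finset.sum_range_succ]; simp only [arrive]; linarith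

/-- The total time warp is a nondecreasing, 1-Lipschitz function of the start time. -/
theorem timeWarp_monotone_lipschitz
    (n : ℕ) (μ e l δ : ℕ → ℝ)
    (hμ : ∀ k ≤ n, 0 ≤ μ k) (hel : ∀ k ≤ n, e k ≤ l k) (hδ : ∀ k < n, 0 ≤ δ k)
    (t t' : ℝ) (ht : t ≤ t') :
    0 ≤ timeWarp n μ e l δ t' - timeWarp n μ e l δ t ∧
    timeWarp n μ e l δ t' - timeWarp n μ e l δ t ≤ t' - t := by
  have h := aux_inv μ e l δ t t' ht (n + 1)
  obtain ⟨hA, hS, hAS⟩ := h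
  have heq : timeWarp n μ e l δ t' - timeWarp n μ e l δ t =
      ∑ k ∈ Finset.range (n + 1),
        (max (arrive μ e l δ t' k - l k) 0 - max (arrive μ e l δ t k - l k) 0) := by
    rw [timeWarp, timeWarp, ← Finset.sum_sub_distrib]
  rw [heq]
  constructor
  · exact hS
  · linarith
end

section
/- For every visit sequence σ and all real start times t ≤ t′, the duration satisfies D_σ(t′) ≤ D_σ(t) and t + D_σ(t) ≤ t′ + D_σ(t′); that is, D_σ is nonincreasing in the start time and the finishing-time proxy t ↦ t + D_σ(t) is nondecreasing (equivalently, D_σ is nonincreasing and 1-Lipschitz). -/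
lemma arrive_mono (μ e l δ : ℕ → ℝ) {t t' : ℝ} (h : t ≤ t') (k : ℕ) :
    arrive μ e l δ t k ≤ arrive μ e l δ t' k := by
  induction k with
  | zero => exact h
  | succ k ih =>
      simp only [arrive]
      have := min_le_min (max_le_max ih (le_refl (e k))) (le_refl (l k))
      linarith

lemma clamp_eq (a ek lk : ℝ) (h : ek ≤ lk) :
    min (max a ek) lk = a + max (ek - a) 0 - max (a - lk) 0 := by
  rcases le_total a ek with h1 | h1 <;> rcases le_total a lk with h2 | h2 <;>
    simp [max_eq_left, max_eq_right, min_eq_left, min_eq_right, *] <;>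
    first
    | (rw [max_eq_right, max_eq_right] <;> linarith)
    | (rw [max_eq_right, max_eq_left] <;> linarith)
    | (rw [max_eq_left, max_eq_right] <;> linarith)
    | (rw [max_eq_left, max_eq_left] <;> linarith)
    | linarith

lemma arrive_eq (μ e l δ : ℕ → ℝ) (t : ℝ) (m : ℕ) (hel : ∀ k < m, e k ≤ l k) :
    arrive μ e l δ t m = t + ∑ k ∈ Finset.range m,
      (μ k + δ k + max (e k - arrive μ e l δ t k) 0 - max (arrive μ e l δ t k - l k) 0) := by
  induction m with
  | zero => simp [arrive]
  | succ m ih =>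
      rw [Finset.sum_range_succ]
      show min (max (arrive μ e l δ t m) (e m)) (l m) + μ m + δ m = _
      rw [clamp_eq _ _ _ (hel m (Nat.lt_succ_self m)),
        ih (fun k hk => hel k (Nat.lt_succ_of_lt hk))]
      ring

/-- The duration is nonincreasing in the start time, and the finishing-time proxy
is nondecreasing (equivalently, the duration is nonincreasing and 1-Lipschitz). -/
theorem duration_antitone_lipschitz
    (n : ℕ) (μ e l δ : ℕ → ℝ)
    (hμ : ∀ k ≤ n, 0 ≤ μ k) (hel : ∀ k ≤ n, e k ≤ l k) (hδ : ∀ k < n, 0 ≤ δ k)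
    (t t' : ℝ) (ht : t ≤ t') :
    duration n μ e l δ t' ≤ duration n μ e l δ t ∧
    t + duration n μ e l δ t ≤ t' + duration n μ e l δ t' := by
  have hW : waiting n μ e l δ t' ≤ waiting n μ e l δ t :=
    Finset.sum_le_sum fun k _ =>
      max_le_max (by linarith [arrive_mono μ e l δ ht k]) le_rfl
  constructor
  · simp only [duration]; linarith
  · have key : ∀ s : ℝ, s + duration n μ e l δ s =
        arrive μ e l δ s (n + 1) + timeWarp n μ e l δ s - δ n := by
      intro s
      have hA := arrive_eq μ e l δ s (n + 1) fun k hk => hel k (Nat.lt_succ_iff.mp hk)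
      simp only [duration, waiting, timeWarp, hA, Finset.sum_add_distrib,
        Finset.sum_sub_distrib, Finset.sum_range_succ]
      ring
    have hTW : timeWarp n μ e l δ t ≤ timeWarp n μ e l δ t' :=
      Finset.sum_le_sum fun k _ =>
        max_le_max (by linarith [arrive_mono μ e l δ ht k]) le_rfl
    have harr := arrive_mono μ e l δ ht (n + 1)
    rw [key t, key t']
    linarith
end

section
/- For every visit sequence σ there exist unique real numbers TW(σ) and L(σ) with TW(σ) ≥ 0 such that for all start times t ∈ ℝ, the total time warp satisfies TW_σ(t) = TW(σ) + max{t − L(σ), 0}; in particular, TW(σ) is the minimum time warp of σ, attained exactly for start times t ≤ L(σ). -/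
lemma warp_clamp (a e l : ℝ) (h : e ≤ l) :
    max (a - l) 0 + min (max a e) l = max a e := by
  simp only [max_def, min_def]; split_ifs <;> linarith

lemma alg1 (t A B c d m l' : ℝ) :
    max (t + d) c + max ((max (t + A) B - max (t + d) c) + m - l') 0
      = max (t + max (A + m - l') d) (max (B + m - l') c) := by
  simp only [max_def]; split_ifs <;> linarith

lemma alg2 (t A B c d m e' : ℝ) :
    max (t + d) c + max ((max (t + A) B - max (t + d) c) + m) e'
      = max (t + max (A + m) (d + e')) (max (B + m) (c + e')) := by
  simp only [max_def]; split_ifs <;> linarith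

lemma tw_key (μ e l δ : ℕ → ℝ) :
    ∀ n : ℕ, (∀ k ≤ n, e k ≤ l k) →
      ∃ c d A B : ℝ, 0 ≤ c ∧ ∀ t : ℝ,
        timeWarp n μ e l δ t = max (t + d) c ∧
        timeWarp n μ e l δ t + serve μ e l δ t n = max (t + A) B := by
  intro n
  induction n with
  | zero =>
    intro h
    refine ⟨0, -(l 0), 0, e 0, le_refl 0, fun t => ?_⟩
    have h0 : timeWarp 0 μ e l δ t = max (t - l 0) 0 := by
      simp [timeWarp, arrive]
    constructor
    · rw [h0, sub_eq_add_neg]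
    · rw [h0, serve]
      simp only [arrive, add_zero]
      exact warp_clamp t (e 0) (l 0) (h 0 le_rfl)
  | succ n ih =>
    intro h
    obtain ⟨c, d, A, B, hc, hf⟩ := ih (fun k hk => h k (le_trans hk (Nat.le_succ n)))
    set m : ℝ := μ n + δ n with hm
    refine ⟨max (B + m - l (n + 1)) c, max (A + m - l (n + 1)) d,
      max (A + m) (d + e (n + 1)), max (B + m) (c + e (n + 1)),
      le_trans hc (le_max_right _ _), fun t => ?_⟩
    obtain ⟨hF, hFS⟩ := hf t
    have ha : arrive μ e l δ t (n + 1) = serve μ e l δ t n + m := by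
      simp only [arrive, serve, hm]; ring
    have hS : serve μ e l δ t n = max (t + A) B - timeWarp n μ e l δ t := by
      linarith
    have hstep : timeWarp (n + 1) μ e l δ t
        = timeWarp n μ e l δ t + max (arrive μ e l δ t (n + 1) - l (n + 1)) 0 := by
      rw [timeWarp, Finset.sum_range_succ]; rfl
    have g1 : timeWarp (n + 1) μ e l δ t
        = max (t + max (A + m - l (n + 1)) d) (max (B + m - l (n + 1)) c) := by
      rw [hstep, ha, hS, hF, alg1]
    refine ⟨g1, ?_⟩
    have hsplit : max (arrive μ e l δ t (n + 1) - l (n + 1)) 0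
        + serve μ e l δ t (n + 1) = max (arrive μ e l δ t (n + 1)) (e (n + 1)) := by
      rw [serve]
      exact warp_clamp _ _ _ (h (n + 1) le_rfl)
    have key : timeWarp (n + 1) μ e l δ t + serve μ e l δ t (n + 1)
        = timeWarp n μ e l δ t + max (serve μ e l δ t n + m) (e (n + 1)) := by
      rw [hstep, add_assoc, hsplit, ha]
    rw [key, hS, hF, alg2]

/-- There exist unique constants TW(σ) ≥ 0 and L(σ) such that
TW_σ(t) = TW(σ) + max (t - L(σ)) 0 for all t; in particular TW(σ) is the
minimum time warp, attained exactly for start times t ≤ L(σ). -/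
theorem timeWarp_representation
    (n : ℕ) (μ e l δ : ℕ → ℝ)
    (hμ : ∀ k ≤ n, 0 ≤ μ k) (hel : ∀ k ≤ n, e k ≤ l k) (hδ : ∀ k < n, 0 ≤ δ k) :
    (∃! p : ℝ × ℝ, 0 ≤ p.1 ∧
        ∀ t : ℝ, timeWarp n μ e l δ t = p.1 + max (t - p.2) 0) ∧
    ∀ TWmin L : ℝ,
      (0 ≤ TWmin ∧ ∀ t : ℝ, timeWarp n μ e l δ t = TWmin + max (t - L) 0) →
        ∀ t : ℝ, TWmin ≤ timeWarp n μ e l δ t ∧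
          (timeWarp n μ e l δ t = TWmin ↔ t ≤ L) := by
  obtain ⟨c, d, A, B, hc, hf⟩ := tw_key μ e l δ n hel
  have hform : ∀ t : ℝ, timeWarp n μ e l δ t = c + max (t - (c - d)) 0 := by
    intro t
    rw [(hf t).1]
    simp only [max_def]; split_ifs <;> linarith
  constructor
  · refine ⟨(c, c - d), ⟨hc, hform⟩, ?_⟩
    rintro ⟨c2, L2⟩ ⟨hc2, h2⟩
    have key : ∀ t : ℝ, c2 + max (t - L2) 0 = c + max (t - (c - d)) 0 :=
      fun t => (h2 t).symm.trans (hform t)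
    have hcc : c2 = c := by
      have h := key (min L2 (c - d))
      have a1 : max (min L2 (c - d) - L2) 0 = 0 :=
        max_eq_right (sub_nonpos.mpr (min_le_left _ _))
      have a2 : max (min L2 (c - d) - (c - d)) 0 = 0 :=
        max_eq_right (sub_nonpos.mpr (min_le_right _ _))
      rw [a1, a2] at h; linarith
    have hL : L2 = c - d := by
      have h1 := key (c - d)
      have h2' := key L2
      have b1 : max (c - d - (c - d)) 0 = 0 := by simp
      have b2 : max (L2 - L2) 0 = 0 := by simp
      rw [b1] at h1; rw [b2] at h2'
      have c1 : max (c - d - L2) 0 = 0 := by linarith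
      have c2' : max (L2 - (c - d)) 0 = 0 := by linarith
      have d1 := le_max_left (c - d - L2) 0
      have d2 := le_max_left (L2 - (c - d)) 0
      linarith
    simp [Prod.ext_iff, hcc, hL]
  · rintro TWmin L ⟨h0, hrep⟩ t
    constructor
    · rw [hrep]; exact le_add_of_nonneg_right (le_max_right _ _)
    · rw [hrep]
      constructor
      · intro hh
        have hz : max (t - L) 0 = 0 := by linarith
        have := le_max_left (t - L) 0
        linarith
      · intro hh
        rw [max_eq_right (sub_nonpos.mpr hh), add_zero]
end

section
/- For every visit sequence σ there exist unique real numbers D(σ) and E(σ) with D(σ) ≥ Σ_{k=0}^{n} μ_k + Σ_{k=0}^{n−1} δ_k such that for all start times t ∈ ℝ, the duration satisfies D_σ(t) = D(σ) + max{E(σ) − t, 0}; in particular, D(σ) is the minimum duration of σ, attained exactly for start times t ≥ E(σ). -/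
lemma key (t E e0 l0 m : ℝ) (h : e0 ≤ l0) (hm : 0 ≤ m) :
    max (e0 - t) 0 + max (E - (min (max t e0) l0 + m)) 0
      = max (E - m - l0) 0 + max (min (max (E - m) e0) l0 - t) 0 := by
  simp only [max_def, min_def]
  split_ifs <;> linarith

lemma arrive_shift (μ e l δ : ℕ → ℝ) (t : ℝ) (k : ℕ) :
    arrive μ e l δ t (k + 1)
      = arrive (fun j => μ (j+1)) (fun j => e (j+1)) (fun j => l (j+1)) (fun j => δ (j+1))
          (min (max t (e 0)) (l 0) + μ 0 + δ 0) k := by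
  induction k with
  | zero => simp [arrive]
  | succ k ih =>
    rw [show arrive μ e l δ t (k + 1 + 1)
        = min (max (arrive μ e l δ t (k + 1)) (e (k + 1))) (l (k + 1)) + μ (k + 1) + δ (k + 1)
      from rfl, ih]
    rfl

lemma waiting_shift (n : ℕ) (μ e l δ : ℕ → ℝ) (t : ℝ) :
    waiting (n + 1) μ e l δ t
      = max (e 0 - t) 0 +
        waiting n (fun j => μ (j+1)) (fun j => e (j+1)) (fun j => l (j+1)) (fun j => δ (j+1))
          (min (max t (e 0)) (l 0) + μ 0 + δ 0) := by
  unfold waiting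
  rw [Finset.sum_range_succ', add_comm]
  have h1 : max (e 0 - arrive μ e l δ t 0) 0 = max (e 0 - t) 0 := by simp [arrive]
  have h2 : ∀ k ∈ Finset.range (n + 1),
      max (e (k+1) - arrive μ e l δ t (k+1)) 0
        = max ((fun j => e (j+1)) k - arrive (fun j => μ (j+1)) (fun j => e (j+1))
            (fun j => l (j+1)) (fun j => δ (j+1)) (min (max t (e 0)) (l 0) + μ 0 + δ 0) k) 0 :=
    fun k _ => by rw [arrive_shift]
  rw [h1, Finset.sum_congr rfl h2]

lemma waiting_rep : ∀ (n : ℕ) (μ e l δ : ℕ → ℝ),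
    (∀ k ≤ n, 0 ≤ μ k) → (∀ k ≤ n, e k ≤ l k) → (∀ k < n, 0 ≤ δ k) →
    ∃ C E : ℝ, 0 ≤ C ∧ ∀ t, waiting n μ e l δ t = C + max (E - t) 0 := by
  intro n
  induction n with
  | zero =>
    intro μ e l δ _ _ _
    exact ⟨0, e 0, le_refl 0, fun t => by simp [waiting, arrive]⟩
  | succ n ih =>
    intro μ e l δ hμ hel hδ
    obtain ⟨C, E, hC, hW⟩ := ih (fun j => μ (j+1)) (fun j => e (j+1)) (fun j => l (j+1))
      (fun j => δ (j+1)) (fun k hk => hμ (k+1) (by omega)) (fun k hk => hel (k+1) (by omega))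
      (fun k hk => hδ (k+1) (by omega))
    refine ⟨C + max (E - (μ 0 + δ 0) - l 0) 0, min (max (E - (μ 0 + δ 0)) (e 0)) (l 0),
      by positivity, fun t => ?_⟩
    rw [waiting_shift, hW]
    have h1 : e 0 ≤ l 0 := hel 0 (by omega)
    have hm : 0 ≤ μ 0 + δ 0 := by
      have := hμ 0 (by omega); have := hδ 0 (by omega); linarith
    have := key t E (e 0) (l 0) (μ 0 + δ 0) h1 hm
    have harg : min (max t (e 0)) (l 0) + μ 0 + δ 0
        = min (max t (e 0)) (l 0) + (μ 0 + δ 0) := by ring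
    rw [harg]
    linarith

/-- There exist unique constants D(σ) ≥ Σμ + Σδ and E(σ) such that
D_σ(t) = D(σ) + max (E(σ) - t) 0 for all t; in particular D(σ) is the minimum
duration, attained exactly for start times t ≥ E(σ). -/
theorem duration_representation
    (n : ℕ) (μ e l δ : ℕ → ℝ)
    (hμ : ∀ k ≤ n, 0 ≤ μ k) (hel : ∀ k ≤ n, e k ≤ l k) (hδ : ∀ k < n, 0 ≤ δ k) :
    (∃! p : ℝ × ℝ,
        (∑ k ∈ Finset.range (n + 1), μ k) + (∑ k ∈ Finset.range n, δ k) ≤ p.1 ∧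
        ∀ t : ℝ, duration n μ e l δ t = p.1 + max (p.2 - t) 0) ∧
    ∀ Dmin E : ℝ,
      ((∑ k ∈ Finset.range (n + 1), μ k) + (∑ k ∈ Finset.range n, δ k) ≤ Dmin ∧
        ∀ t : ℝ, duration n μ e l δ t = Dmin + max (E - t) 0) →
        ∀ t : ℝ, Dmin ≤ duration n μ e l δ t ∧
          (duration n μ e l δ t = Dmin ↔ E ≤ t) := by
  obtain ⟨C, E, hC, hW⟩ := waiting_rep n μ e l δ hμ hel hδ
  set S := (∑ k ∈ Finset.range (n + 1), μ k) + (∑ k ∈ Finset.range n, δ k) with hS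
  constructor
  · refine ⟨(S + C, E), ⟨by simpa using hC, fun t => by
      simp only [duration, hW t, ← hS]; ring⟩, ?_⟩
    rintro ⟨D', E'⟩ ⟨-, h2⟩
    have key : ∀ t : ℝ, D' + max (E' - t) 0 = S + C + max (E - t) 0 := fun t => by
      have := h2 t
      have h3 : duration n μ e l δ t = S + C + max (E - t) 0 := by
        simp only [duration, hW t, ← hS]; ring
      linarith
    have hD : D' = S + C := by
      have := key (max E E')
      have e1 : max (E' - max E E') 0 = 0 :=
        max_eq_right (by simp [sub_nonpos])
      have e2 : max (E - max E E') 0 = 0 :=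
        max_eq_right (by simp [sub_nonpos])
      rw [e1, e2] at this; linarith
    have hE : E' = E := by
      have := key (min E E' - 1)
      have e1 : max (E' - (min E E' - 1)) 0 = E' - (min E E' - 1) :=
        max_eq_left (by have := min_le_right E E'; linarith)
      have e2 : max (E - (min E E' - 1)) 0 = E - (min E E' - 1) :=
        max_eq_left (by have := min_le_left E E'; linarith)
      rw [e1, e2] at this; linarith
    simp [Prod.ext_iff, hD, hE]
  · rintro Dmin E' ⟨-, h2⟩ t
    rw [h2 t]
    have hmax : 0 ≤ max (E' - t) 0 := le_max_right _ _
    refine ⟨by linarith, ?_⟩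
    constructor
    · intro h
      have h0 : max (E' - t) 0 = 0 := by linarith
      have := le_max_left (E' - t) (0:ℝ)
      linarith
    · intro h
      rw [max_eq_right (by linarith : E' - t ≤ 0)]; ring
end

section
/- For all visit sequences σ (length m+1) and σ′ (length n+1), every connecting travel time δ ≥ 0, and every start time t ∈ ℝ, the schedule of the concatenation σ ⊕ δ ⊕ σ′ decomposes as follows: setting b(t) = t + D_σ(t) − TW_σ(t) + δ (the arrival time at the first visit of σ′), one has TW_{σ⊕δ⊕σ′}(t) = TW_σ(t) + TW_{σ′}(b(t)) and D_{σ⊕δ⊕σ′}(t) = D_σ(t) + δ + D_{σ′}(b(t)). -/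
/-- Visit data of the concatenation `σ ⊕ δ ⊕ σ′`: the first `m+1` visits come
from `σ` (data `f`), the remaining ones from `σ′` (data `f'`). -/
noncomputable def catV (m : ℕ) (f f' : ℕ → ℝ) (k : ℕ) : ℝ :=
  if k ≤ m then f k else f' (k - (m + 1))

/-- Travel times of the concatenation `σ ⊕ δ ⊕ σ′`: the first `m` edges come from
`σ`, the connecting edge from visit `m` to visit `m+1` has travel time `c`, and
the remaining edges come from `σ′`. -/
noncomputable def catE (m : ℕ) (δ δ' : ℕ → ℝ) (c : ℝ) (k : ℕ) : ℝ :=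
  if k < m then δ k else if k = m then c else δ' (k - (m + 1))

lemma arrive_congr (μ e l δ μ₂ e₂ l₂ δ₂ : ℕ → ℝ) (t : ℝ) (k : ℕ)
    (h : ∀ i < k, μ i = μ₂ i ∧ e i = e₂ i ∧ l i = l₂ i ∧ δ i = δ₂ i) :
    arrive μ e l δ t k = arrive μ₂ e₂ l₂ δ₂ t k := by
  induction k with
  | zero => rfl
  | succ k ih =>
      obtain ⟨h1, h2, h3, h4⟩ := h k (Nat.lt_succ_self k)
      simp only [arrive, ih (fun i hi => h i (hi.trans (Nat.lt_succ_self k))), h1, h2, h3, h4]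

lemma serve_split (a e l : ℝ) (h : e ≤ l) :
    min (max a e) l = a + max (e - a) 0 - max (a - l) 0 := by
  rcases le_total a e with h1 | h1 <;> rcases le_total a l with h2 | h2 <;>
    simp [max_def, min_def] <;> split_ifs <;> linarith

lemma arrive_telescope (μ e l δ : ℕ → ℝ) (t : ℝ) (k : ℕ)
    (hel : ∀ i ≤ k, e i ≤ l i) :
    arrive μ e l δ t (k + 1) =
      t + ∑ i ∈ Finset.range (k + 1),
        (μ i + δ i + max (e i - arrive μ e l δ t i) 0
          - max (arrive μ e l δ t i - l i) 0) := by
  induction k with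
  | zero =>
      simp [arrive, serve_split _ _ _ (hel 0 le_rfl)]
      ring
  | succ k ih =>
      have ih' := ih (fun i hi => hel i (hi.trans (Nat.le_succ k)))
      show min (max (arrive μ e l δ t (k+1)) (e (k+1))) (l (k+1)) + μ (k+1) + δ (k+1) = _
      rw [serve_split _ _ _ (hel (k+1) le_rfl), Finset.sum_range_succ, ih']
      ring

lemma arrive_cat_front (m : ℕ) (μ e l δ μ' e' l' δ' : ℕ → ℝ) (c t : ℝ) :
    ∀ k ≤ m, arrive (catV m μ μ') (catV m e e') (catV m l l') (catE m δ δ' c) t k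
      = arrive μ e l δ t k := fun k hk =>
  arrive_congr _ _ _ _ _ _ _ _ t k (fun i hi => by
    have h1 : i ≤ m := le_of_lt (lt_of_lt_of_le hi hk)
    have h2 : i < m := lt_of_lt_of_le hi hk
    simp [catV, catE, h1, h2])

lemma arrive_cat_at (m : ℕ) (μ e l δ μ' e' l' δ' : ℕ → ℝ) (c t : ℝ)
    (hel : ∀ k ≤ m, e k ≤ l k) :
    arrive (catV m μ μ') (catV m e e') (catV m l l') (catE m δ δ' c) t (m + 1) =
      t + duration m μ e l δ t - timeWarp m μ e l δ t + c := by
  have hfront := arrive_cat_front m μ e l δ μ' e' l' δ' c t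
  rw [arrive_telescope _ _ _ _ _ m (fun i hi => by simpa [catV, hi] using hel i hi)]
  have hsum : ∑ i ∈ Finset.range (m+1),
      (catV m μ μ' i + catE m δ δ' c i
        + max (catV m e e' i
            - arrive (catV m μ μ') (catV m e e') (catV m l l') (catE m δ δ' c) t i) 0
        - max (arrive (catV m μ μ') (catV m e e') (catV m l l') (catE m δ δ' c) t i
            - catV m l l' i) 0)
      = ∑ i ∈ Finset.range (m+1),
      (μ i + catE m δ δ' c i + max (e i - arrive μ e l δ t i) 0
        - max (arrive μ e l δ t i - l i) 0) :=
    Finset.sum_congr rfl (fun i hi => by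
      have h : i ≤ m := Nat.lt_succ_iff.mp (Finset.mem_range.mp hi)
      rw [hfront i h]; simp [catV, h])
  rw [hsum]
  have hE : ∑ i ∈ Finset.range (m+1), catE m δ δ' c i
      = (∑ i ∈ Finset.range m, δ i) + c := by
    rw [Finset.sum_range_succ]
    congr 1
    · exact Finset.sum_congr rfl (fun i hi => by simp [catE, Finset.mem_range.mp hi])
    · simp [catE]
  simp only [Finset.sum_add_distrib, Finset.sum_sub_distrib, hE, duration, timeWarp, waiting]
  ring

lemma arrive_cat_shift (m : ℕ) (μ e l δ μ' e' l' δ' : ℕ → ℝ) (c t : ℝ)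
    (hel : ∀ k ≤ m, e k ≤ l k) (j : ℕ) :
    arrive (catV m μ μ') (catV m e e') (catV m l l') (catE m δ δ' c) t (m + 1 + j)
      = arrive μ' e' l' δ'
          (t + duration m μ e l δ t - timeWarp m μ e l δ t + c) j := by
  induction j with
  | zero => exact arrive_cat_at m μ e l δ μ' e' l' δ' c t hel
  | succ j ih =>
      have e1 : ¬ (m + 1 + j ≤ m) := by omega
      have e2 : ¬ (m + 1 + j < m) := by omega
      have e3 : ¬ (m + 1 + j = m) := by omega
      have e4 : m + 1 + j - (m + 1) = j := by omega
      show min (max (arrive (catV m μ μ') (catV m e e') (catV m l l') (catE m δ δ' c) t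
          (m + 1 + j)) (catV m e e' (m + 1 + j))) (catV m l l' (m + 1 + j))
          + catV m μ μ' (m + 1 + j) + catE m δ δ' c (m + 1 + j) = _
      rw [ih]
      simp [catV, catE, e1, e2, e3, e4, arrive]


/-- The schedule of the concatenation σ ⊕ δ ⊕ σ′ decomposes: with
b(t) = t + D_σ(t) - TW_σ(t) + δ the arrival at the first visit of σ′, the time
warp and duration split as TW_σ(t) + TW_σ′(b(t)) and D_σ(t) + δ + D_σ′(b(t)). -/
theorem concat_timeWarp_duration_decomposition
    (m n : ℕ) (μ e l δ μ' e' l' δ' : ℕ → ℝ) (c : ℝ)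
    (hμ : ∀ k ≤ m, 0 ≤ μ k) (hel : ∀ k ≤ m, e k ≤ l k) (hδ : ∀ k < m, 0 ≤ δ k)
    (hμ' : ∀ k ≤ n, 0 ≤ μ' k) (hel' : ∀ k ≤ n, e' k ≤ l' k)
    (hδ' : ∀ k < n, 0 ≤ δ' k) (hc : 0 ≤ c) (t : ℝ) :
    timeWarp (m + n + 1) (catV m μ μ') (catV m e e') (catV m l l')
        (catE m δ δ' c) t =
      timeWarp m μ e l δ t +
        timeWarp n μ' e' l' δ'
          (t + duration m μ e l δ t - timeWarp m μ e l δ t + c) ∧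
    duration (m + n + 1) (catV m μ μ') (catV m e e') (catV m l l')
        (catE m δ δ' c) t =
      duration m μ e l δ t + c +
        duration n μ' e' l' δ'
          (t + duration m μ e l δ t - timeWarp m μ e l δ t + c) := by
  have hfront := arrive_cat_front m μ e l δ μ' e' l' δ' c t
  have hshift := arrive_cat_shift m μ e l δ μ' e' l' δ' c t hel
  set b := t + duration m μ e l δ t - timeWarp m μ e l δ t + c with hb
  have hsplit : ∀ F F' : ℕ → ℝ,
      ∑ k ∈ Finset.range (m + n + 1 + 1),
        F k = (∑ k ∈ Finset.range (m + 1), F k) + ∑ j ∈ Finset.range (n + 1), F (m + 1 + j) := by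
    intro F F'
    have h : m + n + 1 + 1 = (m + 1) + (n + 1) := by omega
    rw [h, Finset.sum_range_add]
  have hTW : timeWarp (m + n + 1) (catV m μ μ') (catV m e e') (catV m l l')
        (catE m δ δ' c) t =
      timeWarp m μ e l δ t + timeWarp n μ' e' l' δ' b := by
    unfold timeWarp
    rw [hsplit _ (fun _ => 0)]
    congr 1
    · exact Finset.sum_congr rfl (fun k hk => by
        have h : k ≤ m := Nat.lt_succ_iff.mp (Finset.mem_range.mp hk)
        rw [hfront k h]; simp [catV, h])
    · exact Finset.sum_congr rfl (fun j hj => by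
        have h1 : ¬ (m + 1 + j ≤ m) := by omega
        have h4 : m + 1 + j - (m + 1) = j := by omega
        rw [hshift j]; simp [catV, h1, h4])
  have hW : waiting (m + n + 1) (catV m μ μ') (catV m e e') (catV m l l')
        (catE m δ δ' c) t =
      waiting m μ e l δ t + waiting n μ' e' l' δ' b := by
    unfold waiting
    rw [hsplit _ (fun _ => 0)]
    congr 1
    · exact Finset.sum_congr rfl (fun k hk => by
        have h : k ≤ m := Nat.lt_succ_iff.mp (Finset.mem_range.mp hk)
        rw [hfront k h]; simp [catV, h])
    · exact Finset.sum_congr rfl (fun j hj => by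
        have h1 : ¬ (m + 1 + j ≤ m) := by omega
        have h4 : m + 1 + j - (m + 1) = j := by omega
        rw [hshift j]; simp [catV, h1, h4])
  have hM : ∑ k ∈ Finset.range (m + n + 1 + 1), catV m μ μ' k
      = (∑ k ∈ Finset.range (m + 1), μ k) + ∑ j ∈ Finset.range (n + 1), μ' j := by
    rw [hsplit _ (fun _ => 0)]
    congr 1
    · exact Finset.sum_congr rfl (fun k hk => by
        simp [catV, Nat.lt_succ_iff.mp (Finset.mem_range.mp hk)])
    · exact Finset.sum_congr rfl (fun j hj => by
        have h1 : ¬ (m + 1 + j ≤ m) := by omega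
        have h4 : m + 1 + j - (m + 1) = j := by omega
        simp [catV, h1, h4])
  have hD : ∑ k ∈ Finset.range (m + n + 1), catE m δ δ' c k
      = (∑ k ∈ Finset.range m, δ k) + c + ∑ j ∈ Finset.range n, δ' j := by
    have h : m + n + 1 = m + (n + 1) := by omega
    rw [h, Finset.sum_range_add, add_assoc]
    congr 1
    · exact Finset.sum_congr rfl (fun k hk => by simp [catE, Finset.mem_range.mp hk])
    · rw [Finset.sum_range_succ', add_comm]
      congr 1
      · simp [catE]
      · exact Finset.sum_congr rfl (fun j hj => by
          have h2 : ¬ (m + (j + 1) < m) := by omega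
          have h3 : ¬ (m + (j + 1) = m) := by omega
          have h4 : m + (j + 1) - (m + 1) = j := by omega
          simp [catE, h2, h3, h4])
  constructor
  · exact hTW
  · unfold duration
    rw [hM, hD, hW]
    have := hTW
    ring
end
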